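/- Let A > 1, M ∈ (0, A−1), γ = A^(−1/2), p, q real with |p| ≥ A, |q| ≤ M, and let B be the symmetric matrix with B₁₁ = γ²p², B₁₂ = B₂₁ = γpq, B₂₂ = 1/γ² + q². Then trace(B) ≥ 2s⁻² and det(B) ≥ s⁻²(trace(B) − s⁻²), where s = ((2A + M² − M√(M²+4A))/2)^(−1/2). -/

import Mathlib

theorem stmt_3 (A M γ s p q : ℝ) (hA : 1 < A) (hM : M ∈ Set.Ioo (0:ℝ) (A - 1))
    (hγ : γ = A ^ (-(1/2) : ℝ))
    (hs : s = ((2*A + M^2 - M * Real.sqrt (M^2 + 4*A)) / 2) ^ (-(1/2) : ℝ))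
    (hp : A ≤ |p|) (hq : |q| ≤ M)
    (B : Matrix (Fin 2) (Fin 2) ℝ)
    (hB : B = !![γ^2 * p^2, γ * p * q; γ * p * q, 1/γ^2 + q^2]) :
    2 * s⁻¹ ^ 2 ≤ B.trace ∧ s⁻¹ ^ 2 * (B.trace - s⁻¹ ^ 2) ≤ B.det := by
  obtain ⟨hM0, hM1⟩ := hM
  have hA0 : (0:ℝ) < A := by linarith
  set r := Real.sqrt (M^2 + 4*A) with hr
  have hr0 : 0 ≤ r := Real.sqrt_nonneg _
  have hr2 : r^2 = M^2 + 4*A := Real.sq_sqrt (by nlinarith)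
  set t := (2*A + M^2 - M * r) / 2 with ht
  have ht0 : 0 < t := by
    have h1 : M * r < 2*A + M^2 := by nlinarith [sq_nonneg (M*r - 2*A - M^2)]
    simp only [ht]; linarith
  have htA : t ≤ A := by
    have hMr : M ≤ r := by nlinarith
    simp only [ht]; nlinarith
  have ht2 : t^2 = (2*A + M^2) * t - A^2 := by
    simp only [ht]; nlinarith
  -- s⁻¹ ^ 2 = t
  have hst : s⁻¹ ^ 2 = t := by
    rw [hs, ← Real.rpow_neg ht0.le, neg_neg, ← Real.rpow_natCast (t ^ ((1/2):ℝ)) 2,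
      ← Real.rpow_mul ht0.le]
    norm_num
  -- γ facts
  have hγ2 : γ^2 = A⁻¹ := by
    rw [hγ, ← Real.rpow_natCast (A ^ (-(1/2):ℝ)) 2, ← Real.rpow_mul hA0.le]
    norm_num [Real.rpow_neg_one]
  have hγ2' : 1/γ^2 = A := by rw [hγ2]; field_simp
  have hγ0 : γ ≠ 0 := by rw [hγ]; positivity
  have htr : B.trace = A⁻¹ * p^2 + A + q^2 := by
    rw [hB, Matrix.trace_fin_two_of, hγ2', hγ2]
    ring
  have hdet : B.det = p^2 := by
    rw [hB, Matrix.det_fin_two_of, hγ2']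
    have h1 : γ * p * q * (γ * p * q) = γ^2 * (p^2 * q^2) := by ring
    rw [h1, hγ2]
    have hAinv : A⁻¹ * A = 1 := inv_mul_cancel₀ hA0.ne'
    linear_combination p^2 * hAinv
  have hp2 : A^2 ≤ p^2 := by
    rw [← sq_abs p]
    exact pow_le_pow_left₀ hA0.le hp 2
  have hq2 : q^2 ≤ M^2 := by
    rw [← sq_abs q]
    exact pow_le_pow_left₀ (abs_nonneg q) hq 2
  have hAp : A ≤ A⁻¹ * p^2 := by
    rw [← sub_nonneg]
    have : A⁻¹ * p^2 - A = A⁻¹ * (p^2 - A^2) := by field_simp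
    rw [this]
    exact mul_nonneg (inv_nonneg.2 hA0.le) (sub_nonneg.2 hp2)
  rw [hst, htr, hdet]
  constructor
  · linarith [sq_nonneg q]
  · have hAinv : A⁻¹ * A = 1 := inv_mul_cancel₀ hA0.ne'
    nlinarith [mul_nonneg (sub_nonneg.2 htA) (sub_nonneg.2 hAp),
      mul_nonneg ht0.le (sub_nonneg.2 hq2)]
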